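/- Let X be a compact space, {φ_i}_{i∈I} (I finite) continuous functions with 0 ≤ φ_i ≤ 1 and Σ_i φ_i² = 1, and γ = (γ_{ij}) a Γ-valued cocycle (γ_{ji} = γ_{ij}⁻¹, γ_{ij}γ_{jk} = γ_{ik} whenever the relevant supports intersect). Let π : Γ → U(n) be a unitary representation. Then for each x ∈ X the matrix A_π(x) = (φ_i(x)φ_j(x)π(γ_{ij}))_{i,j∈I} ∈ M_{|I|}(M_n(ℂ)) is a selfadjoint projection. -/

import Mathlib

open Matrix

theorem stmt_11 {X : Type*} [TopologicalSpace X] [CompactSpace X]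
    {Γ : Type*} [Group Γ] {I : Type*} [Fintype I] [DecidableEq I] {n : ℕ}
    (φ : I → X → ℝ) (hφcont : ∀ i, Continuous (φ i))
    (hφ01 : ∀ i x, 0 ≤ φ i x ∧ φ i x ≤ 1)
    (hφsum : ∀ x, ∑ i, (φ i x) ^ 2 = 1)
    (γ : I → I → Γ)
    (hγinv : ∀ i j, γ j i = (γ i j)⁻¹)
    (hγcoc : ∀ i j k, (∃ x, φ i x * φ j x * φ k x ≠ 0) → γ i j * γ j k = γ i k)
    (π : Γ → Matrix (Fin n) (Fin n) ℂ)
    (hπmul : ∀ g h, π (g * h) = π g * π h)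
    (hπstar : ∀ g, (π g)ᴴ = π g⁻¹)
    (hπunitary : ∀ g, π g ∈ Matrix.unitaryGroup (Fin n) ℂ)
    (x : X) (A : Matrix I I (Matrix (Fin n) (Fin n) ℂ))
    (hA : A = fun i j => (φ i x * φ j x) • π (γ i j)) :
    A * A = A ∧ Aᴴ = A := by
  subst hA
  constructor
  · ext i j : 1
    erw [Matrix.mul_apply]
    have key : ∀ k, (φ i x * φ k x) • π (γ i k) * ((φ k x * φ j x) • π (γ k j))
        = ((φ i x * φ j x) * (φ k x) ^ 2) • π (γ i j) := by
      intro k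
      rw [smul_mul_smul_comm]
      by_cases h : φ i x * φ k x * φ j x = 0
      · have h1 : φ i x * φ k x * (φ k x * φ j x) = 0 := by linear_combination φ k x * h
        have h2 : (φ i x * φ j x) * (φ k x) ^ 2 = 0 := by linear_combination φ k x * h
        rw [h1, h2, zero_smul, zero_smul]
      · rw [← hπmul, hγcoc i k j ⟨x, by
          intro hc; exact h (by linear_combination hc)⟩]
        congr 1
        ring
    simp only [key]
    rw [← Finset.sum_smul, ← Finset.mul_sum, hφsum, mul_one]
  · ext i j : 1
    erw [Matrix.conjTranspose_apply, Matrix.star_eq_conjTranspose]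
    rw [Matrix.conjTranspose_smul, hπstar, hγinv, inv_inv, star_trivial, mul_comm]
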